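/- In a symmetric monoidal category, if the symmetry (switch) morphism on L ⊗ L is the identity for an invertible object L, then for any two integers m, n, the canonical coherence isomorphism L^{⊗m} ⊗ L^{⊗n} ≅ L^{⊗n} ⊗ L^{⊗m} given by the symmetry equals the one given by reassociation; i.e. the full subcategory generated by tensor powers of L is symmetric monoidally equivalent to one where the symmetry is trivial. -/

import Mathlib

open CategoryTheory MonoidalCategory

/-- The `n`-th tensor power of an object. -/
def tpow {C : Type*} [Category C] [MonoidalCategory C] (L : C) : ℕ → C
  | 0 => 𝟙_ C
  | n + 1 => tpow L n ⊗ L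

/-- The canonical "reassociation" isomorphism `L^{⊗m} ⊗ L^{⊗n} ≅ L^{⊗(m+n)}`. -/
def tpowMul {C : Type*} [Category C] [MonoidalCategory C] (L : C) :
    ∀ m n : ℕ, tpow L m ⊗ tpow L n ≅ tpow L (m + n)
  | m, 0 => ρ_ (tpow L m)
  | m, n + 1 => (α_ (tpow L m) (tpow L n) L).symm ≪≫ whiskerRightIso (tpowMul L m n) L

/-- Structural "move `L` across `tpow L n`" isomorphism. -/
def lmor {C : Type*} [Category C] [MonoidalCategory C] (L : C) :
    ∀ n : ℕ, L ⊗ tpow L n ≅ tpow L n ⊗ L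
  | 0 => ρ_ L ≪≫ (λ_ L).symm
  | n + 1 => (α_ L (tpow L n) L).symm ≪≫ whiskerRightIso (lmor L n) L

section
variable {C : Type*} [Category C] [MonoidalCategory C]

lemma tpowMul_zero_left (L : C) : ∀ n,
    (tpowMul L 0 n).hom = (λ_ (tpow L n)).hom ≫ eqToHom (congrArg (tpow L) (Nat.zero_add n).symm)
  | 0 => by
    simp only [tpowMul, eqToHom_refl, Category.comp_id]
    exact (unitors_equal).symm
  | n + 1 => by
    have ih := tpowMul_zero_left L n
    refine (congrArg (fun f => (α_ (tpow L 0) (tpow L n) L).inv ≫ f ▷ L) ih).trans ?_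
    show (α_ (𝟙_ C) (tpow L n) L).inv ≫
        ((λ_ (tpow L n)).hom ≫ eqToHom (congrArg (tpow L) (Nat.zero_add n).symm)) ▷ L =
      (λ_ (tpow L n ⊗ L)).hom ≫ eqToHom (congrArg (fun k => tpow L k ⊗ L) (Nat.zero_add n).symm)
    rw [leftUnitor_tensor_hom, comp_whiskerRight, eqToHom_whiskerRight]
    simp only [Category.assoc]

variable [SymmetricCategory C]

lemma braid_L_tpow (L : C) (hL : (β_ L L).hom = 𝟙 (L ⊗ L)) :
    ∀ n, (β_ L (tpow L n)).hom = (lmor L n).hom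
  | 0 => by
    simp only [lmor, Iso.trans_hom, Iso.symm_hom]
    exact braiding_tensorUnit_right L
  | n + 1 => by
    have ih := braid_L_tpow L hL n
    show (β_ L (tpow L n ⊗ L)).hom = (α_ L (tpow L n) L).inv ≫ (lmor L n).hom ▷ L
    rw [BraidedCategory.braiding_tensor_right_hom, ih, hL]
    simp

lemma braid_tpow_L (L : C) (hL : (β_ L L).hom = 𝟙 (L ⊗ L)) (n : ℕ) :
    (β_ (tpow L n) L).hom = (lmor L n).inv := by
  rw [← cancel_epi (β_ L (tpow L n)).hom, SymmetricCategory.symmetry, braid_L_tpow L hL n,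
    Iso.hom_inv_id]

/-- Key structural lemma relating `tpowMul (m+1) n` to `tpowMul m n`. -/
lemma tpowMul_succ_left (L : C) (m : ℕ) : ∀ n,
    (tpowMul L (m+1) n).hom ≫ eqToHom (congrArg (tpow L) (Nat.succ_add_eq_add_succ m n)) =
      (α_ (tpow L m) L (tpow L n)).hom ≫ (tpow L m ◁ (lmor L n).hom) ≫
        (α_ (tpow L m) (tpow L n) L).inv ≫ ((tpowMul L m n).hom ▷ L)
  | 0 => by
    show (ρ_ (tpow L m ⊗ L)).hom ≫ 𝟙 _ = (α_ (tpow L m) L (𝟙_ C)).hom ≫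
      tpow L m ◁ ((ρ_ L).hom ≫ (λ_ L).inv) ≫ (α_ (tpow L m) (𝟙_ C) L).inv ≫ (ρ_ (tpow L m)).hom ▷ L
    simp only [Category.comp_id, MonoidalCategory.whiskerLeft_comp]
    monoidal
  | n + 1 => by
    have ih := tpowMul_succ_left L m n
    have he : (eqToHom (congrArg (tpow L) (Nat.succ_add_eq_add_succ m (n+1)))
        : tpow L (m+1+(n+1)) ⟶ tpow L (m+(n+1)+1)) =
        eqToHom (congrArg (tpow L) (Nat.succ_add_eq_add_succ m n)) ▷ L := by
      exact (eqToHom_whiskerRight _ _).symm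
    rw [he]
    refine (show (tpowMul L (m+1) (n+1)).hom ≫
        eqToHom (congrArg (tpow L) (Nat.succ_add_eq_add_succ m n)) ▷ L =
        ((α_ (tpow L (m+1)) (tpow L n) L).inv ≫ (tpowMul L (m+1) n).hom ▷ L) ≫
          eqToHom (congrArg (tpow L) (Nat.succ_add_eq_add_succ m n)) ▷ L from rfl).trans ?_
    rw [Category.assoc, ← comp_whiskerRight, ih]
    show (α_ (tpow L m ⊗ L) (tpow L n) L).inv ≫ ((α_ (tpow L m) L (tpow L n)).hom ≫
        (tpow L m ◁ (lmor L n).hom) ≫ (α_ (tpow L m) (tpow L n) L).inv ≫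
          ((tpowMul L m n).hom ▷ L)) ▷ L =
      (α_ (tpow L m) L (tpow L n ⊗ L)).hom ≫
        tpow L m ◁ ((α_ L (tpow L n) L).inv ≫ (lmor L n).hom ▷ L) ≫
          (α_ (tpow L m) (tpow L n ⊗ L) L).inv ≫
            ((α_ (tpow L m) (tpow L n) L).inv ≫ (tpowMul L m n).hom ▷ L) ▷ L
    simp only [comp_whiskerRight, MonoidalCategory.whiskerLeft_comp]
    monoidal

lemma key (L : C) (hL : (β_ L L).hom = 𝟙 (L ⊗ L)) (m : ℕ) : ∀ n,
    (β_ (tpow L m) (tpow L n)).hom ≫ (tpowMul L n m).hom =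
      (tpowMul L m n).hom ≫ eqToHom (congrArg (tpow L) (Nat.add_comm m n))
  | 0 => by
    show (β_ (tpow L m) (𝟙_ C)).hom ≫ _ = _
    rw [braiding_tensorUnit_right, tpowMul_zero_left]
    simp only [tpowMul, Category.assoc, Iso.inv_hom_id_assoc]
    rfl
  | n + 1 => by
    have ih := key L hL m n
    show (β_ (tpow L m) (tpow L n ⊗ L)).hom ≫ _ = _
    rw [BraidedCategory.braiding_tensor_right_hom, braid_tpow_L L hL m]
    have h3 := tpowMul_succ_left L n m
    refine (cancel_mono (eqToHom (congrArg (tpow L) (Nat.succ_add_eq_add_succ n m)))).mp ?_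
    refine (Category.assoc _ _ _).trans ?_
    erw [h3]
    have hp1 : tpow L (m+n) ⊗ L = tpow L (n+1+m) := congrArg (tpow L) (Nat.add_comm m (n+1))
    have hp2 : tpow L (n+1+m) = tpow L (n+m) ⊗ L := congrArg (tpow L) (Nat.succ_add_eq_add_succ n m)
    show ((α_ (tpow L m) (tpow L n) L).inv ≫ (β_ (tpow L m) (tpow L n)).hom ▷ L ≫
        (α_ (tpow L n) (tpow L m) L).hom ≫ tpow L n ◁ (lmor L m).inv ≫
          (α_ (tpow L n) L (tpow L m)).inv) ≫ ((α_ (tpow L n) L (tpow L m)).hom ≫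
        tpow L n ◁ (lmor L m).hom ≫ (α_ (tpow L n) (tpow L m) L).inv ≫
          (tpowMul L n m).hom ▷ L) =
      (((α_ (tpow L m) (tpow L n) L).inv ≫ (tpowMul L m n).hom ▷ L) ≫
        eqToHom hp1) ≫ eqToHom hp2
    simp only [Category.assoc, Iso.inv_hom_id_assoc, Iso.hom_inv_id_assoc,
      MonoidalCategory.whiskerLeft_inv_hom_assoc, eqToHom_trans]
    rw [← comp_whiskerRight, ih]
    simp [eqToHom_trans]
end

/-- If the braiding on `L ⊗ L` is the identity for an invertible object `L` of a symmetric
monoidal category, then for all `m, n` the braiding `L^{⊗m} ⊗ L^{⊗n} ≅ L^{⊗n} ⊗ L^{⊗m}`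
agrees with the canonical reassociation isomorphism. -/
theorem stmt19 {C : Type*} [Category C] [MonoidalCategory C] [SymmetricCategory C]
    (L L' : C) (h1 : Nonempty (L ⊗ L' ≅ 𝟙_ C)) (h2 : Nonempty (L' ⊗ L ≅ 𝟙_ C))
    (hL : (β_ L L).hom = 𝟙 (L ⊗ L)) (m n : ℕ) :
    (β_ (tpow L m) (tpow L n)).hom =
      (tpowMul L m n ≪≫ eqToIso (congrArg (tpow L) (Nat.add_comm m n)) ≪≫
        (tpowMul L n m).symm).hom := by
  simp only [Iso.trans_hom, Iso.symm_hom, eqToIso.hom, ← Category.assoc]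
  rw [Iso.eq_comp_inv]
  exact key L hL m n
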